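/- Let 0 < b < a < 1 and 0 < π_1 < 1, and let Σ_1 and Σ_2 be the symmetric 2×2 matrices defined entrywise by: Σ_1[1,1] = (a^3(1−a)(1−π_1)+b^3(1−b)π_1)/((a^2−b^2)^2 π_1^2(1−π_1)), Σ_1[1,2] = −ab(a(1−a)+(a−b)(a+b−1)π_1)/((a^2−b^2)^2(π_1(1−π_1))^{3/2}), Σ_1[2,2] = (a^2 b π_1 + a b^2(1−a−π_1))/((a^2−b^2)^2 π_1(1−π_1)^2); and Σ_2[1,1] = (a b^2 π_1 + a^2 b(1−b−π_1))/((a^2−b^2)^2 π_1^2(1−π_1)), Σ_2[1,2] = −ab(b(1−b)+(a−b)(1−a−b)π_1)/((a^2−b^2)^2(π_1(1−π_1))^{3/2}), Σ_2[2,2] = (a^3(1−a)π_1 + b^3(1−b)(1−π_1))/((a^2−b^2)^2 π_1(1−π_1)^2). Then det(Σ_1) = det(Σ_2) = a(1−a)·b(1−b) / ((a^2−b^2)^2 · π_1^2 (1−π_1)^2). -/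
import Mathlib

open Matrix

/-- The two block-specific asymptotic covariance matrices of the
three-parameter two-block stochastic blockmodel have equal determinants, given by
`a(1−a)·b(1−b)/((a²−b²)²·π₁²(1−π₁)²)`. -/
theorem generalized_variances_equal
    (a b π₁ : ℝ) (hb : 0 < b) (hba : b < a) (ha : a < 1)
    (hπ₁ : 0 < π₁) (hπ₁' : π₁ < 1) :
    let Sig1 : Matrix (Fin 2) (Fin 2) ℝ :=
      !![(a ^ 3 * (1 - a) * (1 - π₁) + b ^ 3 * (1 - b) * π₁) /
           ((a ^ 2 - b ^ 2) ^ 2 * π₁ ^ 2 * (1 - π₁)),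
         -(a * b * (a * (1 - a) + (a - b) * (a + b - 1) * π₁)) /
           ((a ^ 2 - b ^ 2) ^ 2 * (π₁ * (1 - π₁)) ^ ((3 : ℝ) / 2));
         -(a * b * (a * (1 - a) + (a - b) * (a + b - 1) * π₁)) /
           ((a ^ 2 - b ^ 2) ^ 2 * (π₁ * (1 - π₁)) ^ ((3 : ℝ) / 2)),
         (a ^ 2 * b * π₁ + a * b ^ 2 * (1 - a - π₁)) /
           ((a ^ 2 - b ^ 2) ^ 2 * π₁ * (1 - π₁) ^ 2)]
    let Sig2 : Matrix (Fin 2) (Fin 2) ℝ :=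
      !![(a * b ^ 2 * π₁ + a ^ 2 * b * (1 - b - π₁)) /
           ((a ^ 2 - b ^ 2) ^ 2 * π₁ ^ 2 * (1 - π₁)),
         -(a * b * (b * (1 - b) + (a - b) * (1 - a - b) * π₁)) /
           ((a ^ 2 - b ^ 2) ^ 2 * (π₁ * (1 - π₁)) ^ ((3 : ℝ) / 2));
         -(a * b * (b * (1 - b) + (a - b) * (1 - a - b) * π₁)) /
           ((a ^ 2 - b ^ 2) ^ 2 * (π₁ * (1 - π₁)) ^ ((3 : ℝ) / 2)),
         (a ^ 3 * (1 - a) * π₁ + b ^ 3 * (1 - b) * (1 - π₁)) /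
           ((a ^ 2 - b ^ 2) ^ 2 * π₁ * (1 - π₁) ^ 2)]
    Sig1.det = a * (1 - a) * (b * (1 - b)) /
        ((a ^ 2 - b ^ 2) ^ 2 * (π₁ ^ 2 * (1 - π₁) ^ 2)) ∧
    Sig2.det = a * (1 - a) * (b * (1 - b)) /
        ((a ^ 2 - b ^ 2) ^ 2 * (π₁ ^ 2 * (1 - π₁) ^ 2)) := by
  intro Sig1 Sig2
  have hπ₂ : (0:ℝ) < 1 - π₁ := by linarith
  have hx : (0 : ℝ) < π₁ * (1 - π₁) := mul_pos hπ₁ hπ₂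
  set t : ℝ := (π₁ * (1 - π₁)) ^ ((3 : ℝ) / 2) with ht
  have ht0 : 0 < t := Real.rpow_pos_of_pos hx _
  have ht2 : t ^ 2 = (π₁ * (1 - π₁)) ^ 3 := by
    rw [ht, ← Real.rpow_natCast ((π₁ * (1 - π₁)) ^ ((3 : ℝ) / 2)) 2,
      ← Real.rpow_mul hx.le,
      show (3 : ℝ) / 2 * ((2 : ℕ) : ℝ) = ((3 : ℕ) : ℝ) by push_cast; norm_num,
      Real.rpow_natCast]
  have hd : (0 : ℝ) < a ^ 2 - b ^ 2 := by nlinarith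
  have hCC : ((a ^ 2 - b ^ 2) ^ 2 * t) * ((a ^ 2 - b ^ 2) ^ 2 * t)
      = (a ^ 2 - b ^ 2) ^ 4 * (π₁ * (1 - π₁)) ^ 3 := by
    have : ((a ^ 2 - b ^ 2) ^ 2 * t) * ((a ^ 2 - b ^ 2) ^ 2 * t)
        = (a ^ 2 - b ^ 2) ^ 4 * t ^ 2 := by ring
    rw [this, ht2]
  have hA : ((a ^ 2 - b ^ 2) ^ 2 * π₁ ^ 2 * (1 - π₁)) ≠ 0 := by positivity
  have hB : ((a ^ 2 - b ^ 2) ^ 2 * π₁ * (1 - π₁) ^ 2) ≠ 0 := by positivity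
  constructor
  · simp only [Sig1, Matrix.det_fin_two_of]
    rw [div_mul_div_comm, div_mul_div_comm, hCC]
    rw [div_sub_div _ _ (mul_ne_zero hA hB) (by positivity),
      div_eq_div_iff (by positivity) (by positivity)]
    ring
  · simp only [Sig2, Matrix.det_fin_two_of]
    rw [div_mul_div_comm, div_mul_div_comm, hCC]
    rw [div_sub_div _ _ (mul_ne_zero hA hB) (by positivity),
      div_eq_div_iff (by positivity) (by positivity)]
    ring
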